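/- Let N ≥ 1 and let X_1,...,X_n be Hermitian N×N complex matrices satisfying the algebraic structure X_j X_k = α_{jk}·I_N + Σ_{ℓ=1}^n β_{jkℓ} X_ℓ for all j,k, where α ∈ ℂ^{n×n} is Hermitian and each section β_ℓ := (β_{jkℓ})_{1≤j,k≤n} is Hermitian. If every X_k is traceless, i.e. Tr X_k = 0 for k = 1,...,n, then the matrix α is positive semi-definite. -/

import Mathlib

open scoped ComplexOrder
open Matrix

/-- **Positive semi-definiteness of the structure matrix `α` (Theorem 2.3, finite-dimensional
case).** If Hermitian `N×N` matrices `X 1, ..., X n` (with `N ≥ 1`) satisfy the algebraic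
structure `X j * X k = α j k • I + ∑ ℓ, β j k ℓ • X ℓ` with `α` Hermitian and Hermitian
sections `β_ℓ`, and each `X k` is traceless, then the matrix `α` is positive semi-definite. -/
theorem alpha_posSemidef_of_traceless
    {N n : ℕ} (hN : 1 ≤ N)
    (X : Fin n → Matrix (Fin N) (Fin N) ℂ)
    (α : Matrix (Fin n) (Fin n) ℂ) (β : Fin n → Fin n → Fin n → ℂ)
    (hX : ∀ k, (X k).IsHermitian)
    (hstruct : ∀ j k, X j * X k
      = α j k • (1 : Matrix (Fin N) (Fin N) ℂ) + ∑ ℓ, β j k ℓ • X ℓ)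
    (hα : α.IsHermitian)
    (hβ : ∀ ℓ, (Matrix.of fun j k => β j k ℓ).IsHermitian)
    (htr : ∀ k, (X k).trace = 0) :
    α.PosSemidef := by
  refine Matrix.posSemidef_iff_dotProduct_mulVec.mpr ⟨hα, fun x => ?_⟩
  have key : ∀ j k, (X j * X k).trace = (N : ℂ) * α j k := by
    intro j k
    rw [hstruct j k]
    simp [Matrix.trace_smul, htr, mul_comm]
  set Y := ∑ k, x k • X k with hYdef
  have hYH : Yᴴ = ∑ j, (starRingEnd ℂ) (x j) • X j := by
    simp [hYdef, Matrix.conjTranspose_sum, Matrix.conjTranspose_smul,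
      fun j => (hX j).eq]
  have htrY : (Yᴴ * Y).trace = (N : ℂ) * (dotProduct (star x) (α.mulVec x)) := by
    rw [hYH, hYdef, Finset.sum_mul]
    simp only [Finset.mul_sum, Matrix.smul_mul, Matrix.mul_smul, Matrix.trace_sum,
      Matrix.trace_smul, smul_smul, smul_eq_mul, key]
    rw [dotProduct, Finset.mul_sum]
    congr 1; ext j
    rw [Matrix.mulVec, dotProduct]
    simp [Finset.mul_sum]
    ring_nf
    congr 1; ext k; ring
  have hpos : 0 ≤ (Yᴴ * Y).trace := by
    rw [Matrix.trace]
    refine Finset.sum_nonneg fun i _ => ?_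
    rw [Matrix.diag_apply, Matrix.mul_apply]
    exact Finset.sum_nonneg fun j _ => by
      simpa [Matrix.conjTranspose_apply] using star_mul_self_nonneg (Y j i)
  rw [htrY] at hpos
  have hNpos : (0 : ℂ) < (N : ℂ) := by
    exact_mod_cast Nat.cast_pos.mpr hN
  have hinv : (0:ℂ) ≤ ((N:ℂ))⁻¹ := by
    have : ((N:ℂ))⁻¹ = (((N:ℝ))⁻¹ : ℂ) := by push_cast; ring
    rw [this]
    rw [← Complex.ofReal_inv]
    exact Complex.zero_le_real.mpr (inv_nonneg.mpr (Nat.cast_nonneg N))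
  have := mul_nonneg hinv hpos
  rwa [← mul_assoc, inv_mul_cancel₀ hNpos.ne', one_mul] at this
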